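/- Let (V,g) be a finite-dimensional real vector space with a nondegenerate symmetric bilinear form, and let A be a symmetric bilinear form on V of rank 2. Then Q(A², (1/2)·A ∧ A) = 0, where Q is the Tachibana tensor and ∧ the Kulkarni–Nomizu product. -/

import Mathlib

variable {V : Type*} [AddCommGroup V] [Module ℝ V]

/-- Kulkarni–Nomizu product of two (0,2)-tensors. -/
def kn (A B : V → V → ℝ) : V → V → V → V → ℝ := fun x1 x2 x3 x4 =>
  A x1 x4 * B x2 x3 + A x2 x3 * B x1 x4 - A x1 x3 * B x2 x4 - A x2 x4 * B x1 x3

/-- The endomorphism `(X ∧_A Y)Z = A(Y,Z)X − A(X,Z)Y`. -/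
def wedgeV (A : V → V → ℝ) (x y z : V) : V := A y z • x - A x z • y

/-- Tachibana tensor `Q(A,T)` of a (0,2)-tensor `A` and a (0,4)-tensor `T`. -/
def Q4 (A : V → V → ℝ) (T : V → V → V → V → ℝ) : V → V → V → V → V → V → ℝ :=
  fun x1 x2 x3 x4 x y =>
    -(T (wedgeV A x y x1) x2 x3 x4) - T x1 (wedgeV A x y x2) x3 x4
      - T x1 x2 (wedgeV A x y x3) x4 - T x1 x2 x3 (wedgeV A x y x4)

/-- Key algebraic identity: if both `A` and `A²` are symmetric forms built from
two scalar functions `p, q`, then the Tachibana tensor vanishes. -/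
theorem key_identity {V : Type*} [AddCommGroup V] [Module ℝ V]
    (A : V →ₗ[ℝ] V →ₗ[ℝ] ℝ) (a : V →ₗ[ℝ] V) (p q : V → ℝ) (α β δ t1 t2 t3 : ℝ)
    (hAf : ∀ u v, A u v = α*(p u*p v) + β*(p u*q v + q u*p v) + δ*(q u*q v))
    (hBf : ∀ u v, A (a u) v = t1*(p u*p v) + t2*(p u*q v + q u*p v) + t3*(q u*q v)) :
    ∀ x₁ x₂ x₃ x₄ x y : V,
      Q4 (fun u v => A (a u) v)
        (fun p q r s => (1/2 : ℝ) * kn (fun u v => A u v) (fun u v => A u v) p q r s)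
        x₁ x₂ x₃ x₄ x y = 0 := by
  intro x₁ x₂ x₃ x₄ x y
  simp only [Q4, kn, wedgeV, map_sub, map_smul, LinearMap.sub_apply, LinearMap.smul_apply,
    smul_eq_mul]
  simp only [hBf]
  simp only [hAf]
  ring

/-- if `rank A = 2` then `Q(A², (1/2)·A ∧ A) = 0`. -/
theorem stmt_8 {V : Type*} [AddCommGroup V] [Module ℝ V] [FiniteDimensional ℝ V]
    (g A : V →ₗ[ℝ] V →ₗ[ℝ] ℝ)
    (hg : ∀ x y, g x y = g y x)
    (hgnd : ∀ x : V, (∀ y : V, g x y = 0) → x = 0)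
    (hA : ∀ x y, A x y = A y x)
    (a : V →ₗ[ℝ] V) (ha : ∀ x y, g (a x) y = A x y)
    (hrank : Module.finrank ℝ (LinearMap.range a) = 2) :
    ∀ x₁ x₂ x₃ x₄ x y : V,
      Q4 (fun u v => A (a u) v)
        (fun p q r s => (1/2 : ℝ) * kn (fun u v => A u v) (fun u v => A u v) p q r s)
        x₁ x₂ x₃ x₄ x y = 0 := by
  classical
  set W := LinearMap.range a with hWdef
  have b : Module.Basis (Fin 2) ℝ W := Module.finBasisOfFinrankEq ℝ W hrank
  set e1 : V := (b 0 : V) with he1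
  set e2 : V := (b 1 : V) with he2
  set ar : V →ₗ[ℝ] W := a.rangeRestrict with har
  set p : V → ℝ := fun u => b.repr (ar u) 0 with hp
  set q : V → ℝ := fun u => b.repr (ar u) 1 with hq
  have hau : ∀ u, a u = p u • e1 + q u • e2 := by
    intro u
    have h := b.sum_repr (ar u)
    have h2 : a u = ((ar u : W) : V) := rfl
    rw [h2, ← h]
    push_cast [Fin.sum_univ_two]
    rfl
  have hA' : ∀ u v, A u v = p u * g e1 v + q u * g e2 v := by
    intro u v
    rw [← ha, hau u]
    simp [smul_eq_mul]
  -- vectors dual to p, q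
  obtain ⟨u1, hu1⟩ : ∃ u1, a u1 = e1 := (b 0).2
  obtain ⟨u2, hu2⟩ : ∃ u2, a u2 = e2 := (b 1).2
  have har1 : ar u1 = b 0 := Subtype.ext (by simpa [ar] using hu1)
  have har2 : ar u2 = b 1 := Subtype.ext (by simpa [ar] using hu2)
  have hp1 : p u1 = 1 := by simp [hp, har1]
  have hq1 : q u1 = 0 := by simp [hq, har1]
  have hp2 : p u2 = 0 := by simp [hp, har2]
  have hq2 : q u2 = 1 := by simp [hq, har2]
  -- express the functionals g e1 ·, g e2 · through p, q using the symmetry of A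
  have hφ : ∀ v, g e1 v = g e1 u1 * p v + g e2 u1 * q v := by
    intro v
    have h1 := hA' u1 v
    have h2 := hA' v u1
    rw [hA u1 v] at h1
    rw [hp1, hq1] at h1
    rw [h2] at h1
    linarith
  have hψ : ∀ v, g e2 v = g e1 u2 * p v + g e2 u2 * q v := by
    intro v
    have h1 := hA' u2 v
    have h2 := hA' v u2
    rw [hA u2 v] at h1
    rw [hp2, hq2] at h1
    rw [h2] at h1
    linarith
  have hβ : g e2 u1 = g e1 u2 := by
    have h1 := hA' u1 u2
    have h2 := hA' u2 u1
    rw [hA u1 u2, h2] at h1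
    rw [hp1, hq1, hp2, hq2] at h1
    linarith
  have hAf : ∀ u v, A u v = (g e1 u1)*(p u*p v) + (g e2 u1)*(p u*q v + q u*p v)
      + (g e2 u2)*(q u*q v) := by
    intro u v
    rw [hA' u v, hφ v, hψ v, ← hβ]
    ring
  have hBf : ∀ u v, A (a u) v = (g e1 e1)*(p u*p v) + (g e1 e2)*(p u*q v + q u*p v)
      + (g e2 e2)*(q u*q v) := by
    intro u v
    rw [hA (a u) v, ← ha, hau u, hau v]
    simp only [map_add, map_smul, LinearMap.add_apply, LinearMap.smul_apply, smul_eq_mul]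
    rw [hg e2 e1]
    ring
  exact key_identity A a p q _ _ _ _ _ _ hAf hBf
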